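/- N(Γ₀(3)) = 2: the set of cosets P·SL₂(ℤ) in SL₂(ℝ)/SL₂(ℤ) such that P⁻¹·A·P has integer entries for every A ∈ Γ₀(3) has exactly 2 elements. -/

import Mathlib

open Matrix MatrixGroups CongruenceSubgroup

/-- A real 2×2 matrix has integer entries. -/
def IsIntegerMatrix (M : Matrix (Fin 2) (Fin 2) ℝ) : Prop :=
  ∀ i j, ∃ k : ℤ, M i j = (k : ℝ)

/-- The embedding `SL(2, ℤ) →* SL(2, ℝ)`. -/
noncomputable def toSL2R : SL(2, ℤ) →* SL(2, ℝ) :=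
  Matrix.SpecialLinearGroup.map (Int.castRingHom ℝ)

/-- `SL(2, ℤ)` as a subgroup of `SL(2, ℝ)`. -/
noncomputable def SL2ZinR : Subgroup SL(2, ℝ) := toSL2R.range

/-- The set of cosets `P·SL₂(ℤ)` in `SL₂(ℝ)/SL₂(ℤ)` such that `P⁻¹·A·P` has integer
entries for every `A ∈ G`; its cardinality is `N(G)`. -/
noncomputable def goodCosets (G : Subgroup SL(2, ℤ)) : Set (SL(2, ℝ) ⧸ SL2ZinR) :=
  {x | ∃ P : SL(2, ℝ), x = QuotientGroup.mk P ∧ ∀ A ∈ G,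
    IsIntegerMatrix ((P⁻¹ * toSL2R A * P : SL(2, ℝ)) : Matrix (Fin 2) (Fin 2) ℝ)}

/- ### Auxiliary material -/

theorem keyLemma : ∀ n : ℕ, ∀ D e g t v : ℤ, D.natAbs = n → 0 < D →
    e * v - g * t = D → D ∣ t ^ 2 → D ∣ v ^ 2 → D ∣ 3 * e ^ 2 → D ∣ 3 * g ^ 2 →
    ∃ w : ℤ, 0 < w ∧
      ((D = w ^ 2 ∧ w ∣ e ∧ w ∣ g ∧ w ∣ t ∧ w ∣ v) ∨
       (D = 3 * w ^ 2 ∧ w ∣ e ∧ w ∣ g ∧ 3 * w ∣ t ∧ 3 * w ∣ v)) := by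
  intro n
  induction n using Nat.strong_induction_on with
  | _ n ih =>
    intro D e g t v hn hD hdet ht hv he hg
    have p3 : Prime (3 : ℤ) := Int.prime_three
    by_cases h1 : D = 1
    · exact ⟨1, one_pos, Or.inl ⟨by omega, one_dvd _, one_dvd _, one_dvd _, one_dvd _⟩⟩
    by_cases h3 : D = 3
    · subst h3
      have h3t : (3:ℤ) ∣ t := p3.dvd_of_dvd_pow ht
      have h3v : (3:ℤ) ∣ v := p3.dvd_of_dvd_pow hv
      exact ⟨1, one_pos, Or.inr ⟨by ring, one_dvd _, one_dvd _, by simpa using h3t,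
        by simpa using h3v⟩⟩
    by_cases h9 : (9:ℤ) ∣ D
    · have h3t : (3:ℤ) ∣ t := p3.dvd_of_dvd_pow (dvd_trans (by norm_num) (dvd_trans h9 ht))
      have h3v : (3:ℤ) ∣ v := p3.dvd_of_dvd_pow (dvd_trans (by norm_num) (dvd_trans h9 hv))
      have h3e : (3:ℤ) ∣ e := by
        have h' : (9:ℤ) ∣ 3 * e ^ 2 := dvd_trans h9 he
        have : (3:ℤ) ∣ e ^ 2 := by
          obtain ⟨k, hk⟩ := h'
          exact ⟨k, by linarith⟩
        exact p3.dvd_of_dvd_pow this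
      have h3g : (3:ℤ) ∣ g := by
        have h' : (9:ℤ) ∣ 3 * g ^ 2 := dvd_trans h9 hg
        have : (3:ℤ) ∣ g ^ 2 := by
          obtain ⟨k, hk⟩ := h'
          exact ⟨k, by linarith⟩
        exact p3.dvd_of_dvd_pow this
      obtain ⟨t', rfl⟩ := h3t
      obtain ⟨v', rfl⟩ := h3v
      obtain ⟨e', rfl⟩ := h3e
      obtain ⟨g', rfl⟩ := h3g
      obtain ⟨D', rfl⟩ := h9
      have hD' : 0 < D' := by omega
      have hlt : D'.natAbs < n := by omega
      have hdet' : e' * v' - g' * t' = D' := by nlinarith [hdet]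
      have ht' : D' ∣ t' ^ 2 := by
        obtain ⟨k, hk⟩ := ht; exact ⟨k, by nlinarith⟩
      have hv' : D' ∣ v' ^ 2 := by
        obtain ⟨k, hk⟩ := hv; exact ⟨k, by nlinarith⟩
      have he' : D' ∣ 3 * e' ^ 2 := by
        obtain ⟨k, hk⟩ := he; exact ⟨k, by nlinarith⟩
      have hg' : D' ∣ 3 * g' ^ 2 := by
        obtain ⟨k, hk⟩ := hg; exact ⟨k, by nlinarith⟩
      obtain ⟨w, hw, hcase⟩ := ih _ hlt D' e' g' t' v' rfl hD' hdet' ht' hv' he' hg'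
      refine ⟨3 * w, by positivity, ?_⟩
      rcases hcase with ⟨hDw, he1, hg1, ht1, hv1⟩ | ⟨hDw, he1, hg1, ht1, hv1⟩
      · exact Or.inl ⟨by rw [hDw]; ring, mul_dvd_mul_left 3 he1, mul_dvd_mul_left 3 hg1,
          mul_dvd_mul_left 3 ht1, mul_dvd_mul_left 3 hv1⟩
      · refine Or.inr ⟨by rw [hDw]; ring, mul_dvd_mul_left 3 he1, mul_dvd_mul_left 3 hg1, ?_, ?_⟩
        · obtain ⟨k, hk⟩ := ht1; exact ⟨k, by rw [hk]; ring⟩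
        · obtain ⟨k, hk⟩ := hv1; exact ⟨k, by rw [hk]; ring⟩
    · -- there is a prime p ≠ ±3 dividing D
      have hexp : ∃ p : ℤ, Prime p ∧ 0 < p ∧ p ∣ D ∧ p ≠ 3 := by
        by_cases h3d : (3:ℤ) ∣ D
        · obtain ⟨m, rfl⟩ := h3d
          have hm1 : m.natAbs ≠ 1 := by
            intro h
            rcases Int.natAbs_eq_iff.mp h with h | h <;> omega
          obtain ⟨p, hp, hpd⟩ := Int.exists_prime_and_dvd hm1
          have hppos : (0:ℤ) < (p.natAbs : ℤ) := by
            have := hp.ne_zero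
            omega
          refine ⟨(p.natAbs : ℤ), Int.prime_iff_natAbs_prime.mpr (by simpa [Int.natAbs_abs] using Int.prime_iff_natAbs_prime.mp hp), hppos,
            dvd_trans (Int.natAbs_dvd.mpr hpd) ⟨3, by ring⟩, ?_⟩
          intro hcon
          have : (3:ℤ) ∣ m := by
            rw [← hcon]; exact Int.natAbs_dvd.mpr hpd
          obtain ⟨k, rfl⟩ := this
          exact h9 ⟨k, by ring⟩
        · have hD1 : D.natAbs ≠ 1 := by
            intro h
            rcases Int.natAbs_eq_iff.mp h with h | h <;> omega
          obtain ⟨p, hp, hpd⟩ := Int.exists_prime_and_dvd hD1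
          have hppos : (0:ℤ) < (p.natAbs : ℤ) := by
            have := hp.ne_zero
            omega
          refine ⟨(p.natAbs : ℤ), Int.prime_iff_natAbs_prime.mpr (by simpa [Int.natAbs_abs] using Int.prime_iff_natAbs_prime.mp hp), hppos,
            Int.natAbs_dvd.mpr hpd, ?_⟩
          intro hcon
          exact h3d (hcon ▸ Int.natAbs_dvd.mpr hpd)
      obtain ⟨p, hp, hppos, hpD, hp3⟩ := hexp
      have hpne3' : ¬ (p ∣ (3:ℤ)) := by
        intro hcon
        have h1' : p.natAbs ∣ 3 := by
          have := Int.natAbs_dvd_natAbs.mpr hcon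
          simpa using this
        have hpn : Nat.Prime p.natAbs := Int.prime_iff_natAbs_prime.mp hp
        have : p.natAbs = 3 := (Nat.prime_dvd_prime_iff_eq hpn (by norm_num)).mp h1'
        omega
      have hpt : p ∣ t := hp.dvd_of_dvd_pow (dvd_trans hpD ht)
      have hpv : p ∣ v := hp.dvd_of_dvd_pow (dvd_trans hpD hv)
      have hpe : p ∣ e := by
        rcases hp.dvd_mul.mp (dvd_trans hpD he) with h | h
        · exact absurd h hpne3'
        · exact hp.dvd_of_dvd_pow h
      have hpg : p ∣ g := by
        rcases hp.dvd_mul.mp (dvd_trans hpD hg) with h | h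
        · exact absurd h hpne3'
        · exact hp.dvd_of_dvd_pow h
      obtain ⟨t', rfl⟩ := hpt
      obtain ⟨v', rfl⟩ := hpv
      obtain ⟨e', rfl⟩ := hpe
      obtain ⟨g', rfl⟩ := hpg
      have hp2D : p ^ 2 ∣ D := by
        refine ⟨e' * v' - g' * t', ?_⟩
        rw [← hdet]; ring
      obtain ⟨D', rfl⟩ := hp2D
      have hp2 : 2 ≤ p := by
        rcases (lt_or_ge p 2) with h | h
        · exfalso
          interval_cases p
          exact hp.not_unit isUnit_one
        · exact h
      have hD' : 0 < D' := by nlinarith [hD, hp2]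
      have hlt : D'.natAbs < n := by
        have hp4 : 4 ≤ p ^ 2 := by nlinarith
        have h' : D' < p ^ 2 * D' := by nlinarith
        omega
      have cancel : ∀ x y : ℤ, p ^ 2 * x = p ^ 2 * y → x = y :=
        fun x y h => mul_left_cancel₀ (pow_ne_zero 2 hp.ne_zero) h
      have hdet' : e' * v' - g' * t' = D' := cancel _ _ (by linear_combination hdet)
      have ht' : D' ∣ t' ^ 2 := by
        obtain ⟨k, hk⟩ := ht; exact ⟨k, cancel _ _ (by linear_combination hk)⟩
      have hv' : D' ∣ v' ^ 2 := by
        obtain ⟨k, hk⟩ := hv; exact ⟨k, cancel _ _ (by linear_combination hk)⟩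
      have he' : D' ∣ 3 * e' ^ 2 := by
        obtain ⟨k, hk⟩ := he; exact ⟨k, cancel _ _ (by linear_combination hk)⟩
      have hg' : D' ∣ 3 * g' ^ 2 := by
        obtain ⟨k, hk⟩ := hg; exact ⟨k, cancel _ _ (by linear_combination hk)⟩
      obtain ⟨w, hw, hcase⟩ := ih _ hlt D' e' g' t' v' rfl hD' hdet' ht' hv' he' hg'
      refine ⟨p * w, by positivity, ?_⟩
      rcases hcase with ⟨hDw, he1, hg1, ht1, hv1⟩ | ⟨hDw, he1, hg1, ht1, hv1⟩
      · exact Or.inl ⟨by rw [hDw]; ring, mul_dvd_mul_left p he1, mul_dvd_mul_left p hg1,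
          mul_dvd_mul_left p ht1, mul_dvd_mul_left p hv1⟩
      · refine Or.inr ⟨by rw [hDw]; ring, mul_dvd_mul_left p he1, mul_dvd_mul_left p hg1, ?_, ?_⟩
        · obtain ⟨k, hk⟩ := ht1; exact ⟨k, by rw [hk]; ring⟩
        · obtain ⟨k, hk⟩ := hv1; exact ⟨k, by rw [hk]; ring⟩

local notation "√3" => Real.sqrt 3

lemma sqrt3_pos : (0:ℝ) < √3 := Real.sqrt_pos.mpr (by norm_num)

lemma sqrt3_ne : (√3 : ℝ) ≠ 0 := ne_of_gt sqrt3_pos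

lemma sqrt3_sq : (√3 : ℝ) * √3 = 3 := Real.mul_self_sqrt (by norm_num)

/-- The second coset representative `diag (1/√3, √3)`. -/
noncomputable def P2 : SL(2,ℝ) :=
  ⟨!![(√3)⁻¹, 0; 0, √3], by
    rw [Matrix.det_fin_two_of]
    field_simp
    norm_num⟩

lemma P2_coe : (P2 : Matrix (Fin 2) (Fin 2) ℝ) = !![(√3)⁻¹, 0; 0, √3] := rfl

def Tm : SL(2,ℤ) := ⟨!![1,1;0,1], by norm_num [Matrix.det_fin_two_of]⟩
def T'm : SL(2,ℤ) := ⟨!![1,0;3,1], by norm_num [Matrix.det_fin_two_of]⟩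
def Wm : SL(2,ℤ) := ⟨!![4,1;3,1], by norm_num [Matrix.det_fin_two_of]⟩
def Sm : SL(2,ℤ) := ⟨!![0,-1;1,0], by norm_num [Matrix.det_fin_two_of]⟩

lemma Tm_mem : Tm ∈ Gamma0 3 := by rw [Gamma0_mem]; rfl
lemma T'm_mem : T'm ∈ Gamma0 3 := by rw [Gamma0_mem]; rfl
lemma Wm_mem : Wm ∈ Gamma0 3 := by rw [Gamma0_mem]; rfl

lemma isInt_mul {M N : Matrix (Fin 2) (Fin 2) ℝ} (hM : IsIntegerMatrix M)
    (hN : IsIntegerMatrix N) : IsIntegerMatrix (M * N) := by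
  intro i j
  obtain ⟨a0, h0⟩ := hM i 0
  obtain ⟨a1, h1⟩ := hM i 1
  obtain ⟨b0, g0⟩ := hN 0 j
  obtain ⟨b1, g1⟩ := hN 1 j
  exact ⟨a0 * b0 + a1 * b1, by
    rw [Matrix.mul_apply, Fin.sum_univ_two, h0, h1, g0, g1]; push_cast; ring⟩

lemma isInt_toSL2R (C : SL(2,ℤ)) :
    IsIntegerMatrix ((toSL2R C : SL(2,ℝ)) : Matrix (Fin 2) (Fin 2) ℝ) :=
  fun i j => ⟨C i j, by simp [toSL2R]⟩

lemma toSL2R_mk_apply (M : Matrix (Fin 2) (Fin 2) ℤ) (h : M.det = 1) (i j : Fin 2) :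
    ((toSL2R ⟨M, h⟩ : SL(2,ℝ)) : Matrix (Fin 2) (Fin 2) ℝ) i j = ((M i j : ℤ) : ℝ) := rfl

lemma conj_coe (P : SL(2,ℝ)) (A : SL(2,ℤ)) :
    ((P⁻¹ * toSL2R A * P : SL(2,ℝ)) : Matrix (Fin 2) (Fin 2) ℝ)
      = !![P 1 1, -(P 0 1); -(P 1 0), P 0 0] *
        ((A : Matrix (Fin 2) (Fin 2) ℤ).map (Int.cast : ℤ → ℝ)) *
        (P : Matrix (Fin 2) (Fin 2) ℝ) := by
  simp [Matrix.SpecialLinearGroup.coe_mul, Matrix.SpecialLinearGroup.coe_inv,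
    Matrix.adjugate_fin_two, toSL2R]

/-- the one coset membership -/
lemma one_mem_good : (QuotientGroup.mk 1 : SL(2,ℝ) ⧸ SL2ZinR) ∈ goodCosets (Gamma0 3) := by
  refine ⟨1, rfl, fun A _ => ?_⟩
  have : (1:SL(2,ℝ))⁻¹ * toSL2R A * 1 = toSL2R A := by group
  rw [this]
  exact isInt_toSL2R A

/-- the P2 coset membership -/
lemma P2_mem_good : (QuotientGroup.mk P2 : SL(2,ℝ) ⧸ SL2ZinR) ∈ goodCosets (Gamma0 3) := by
  refine ⟨P2, rfl, fun A hA => ?_⟩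
  have hc : (3:ℤ) ∣ A 1 0 := by
    have := Gamma0_mem.mp hA
    exact_mod_cast (ZMod.intCast_zmod_eq_zero_iff_dvd _ 3).mp this
  obtain ⟨c', hc'⟩ := hc
  rw [conj_coe]
  intro i j
  fin_cases i <;> fin_cases j <;>
    simp [P2, Matrix.mul_apply, Fin.sum_univ_two, Matrix.map_apply, Matrix.vecMul, dotProduct]
  · exact ⟨A 0 0, by field_simp⟩
  · exact ⟨3 * A 0 1, by push_cast; linear_combination ((A 0 1 : ℤ) : ℝ) * sqrt3_sq⟩
  · refine ⟨c', ?_⟩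
    rw [hc']
    push_cast
    rw [show (√3⁻¹ * (3 * (c':ℝ)) * √3⁻¹) = (√3⁻¹ * √3⁻¹) * (3 * (c':ℝ)) by ring,
      show ((√3)⁻¹ * (√3)⁻¹ : ℝ) = 3⁻¹ by rw [← mul_inv, sqrt3_sq]]
    ring
  · exact ⟨A 1 1, by field_simp⟩


lemma main_aux (P : SL(2,ℝ)) (hs : (P : Matrix (Fin 2) (Fin 2) ℝ) 1 1 ≠ 0)
    (hgood : ∀ A ∈ Gamma0 3,
      IsIntegerMatrix ((P⁻¹ * toSL2R A * P : SL(2,ℝ)) : Matrix (Fin 2) (Fin 2) ℝ)) :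
    (QuotientGroup.mk P : SL(2,ℝ) ⧸ SL2ZinR) = QuotientGroup.mk 1 ∨
    (QuotientGroup.mk P : SL(2,ℝ) ⧸ SL2ZinR) = QuotientGroup.mk P2 := by
  have hdet : P 0 0 * P 1 1 - P 0 1 * P 1 0 = 1 := by
    have h := P.2
    rw [Matrix.det_fin_two] at h
    exact h
  obtain ⟨k1, h1⟩ := hgood Tm Tm_mem 0 0
  obtain ⟨k2, h2⟩ := hgood Tm Tm_mem 0 1
  obtain ⟨k3, h3⟩ := hgood Tm Tm_mem 1 0
  obtain ⟨k4, h4⟩ := hgood T'm T'm_mem 1 0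
  obtain ⟨k5, h5⟩ := hgood T'm T'm_mem 0 1
  obtain ⟨k6, h6⟩ := hgood T'm T'm_mem 0 0
  obtain ⟨k9, h9⟩ := hgood Wm Wm_mem 0 0
  obtain ⟨k10, h10⟩ := hgood Wm Wm_mem 0 1
  simp only [Matrix.SpecialLinearGroup.coe_mul, Matrix.SpecialLinearGroup.coe_inv,
    Matrix.adjugate_fin_two, toSL2R_mk_apply, Tm, T'm, Wm, Matrix.mul_apply, Fin.sum_univ_two,
    Matrix.vecMul, dotProduct, Matrix.map_apply,
    Matrix.SpecialLinearGroup.map_apply_coe, RingHom.mapMatrix_apply, Int.coe_castRingHom,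
    Matrix.cons_val', Matrix.cons_val_zero, Matrix.cons_val_one, Matrix.head_cons,
    Matrix.head_fin_const, Matrix.empty_val', Matrix.cons_val_fin_one, Int.cast_one,
    Int.cast_zero, Int.cast_ofNat, Matrix.of_apply, Int.cast_neg,
    mul_one, mul_zero, one_mul, zero_mul, add_zero, zero_add, neg_zero] at h1 h2 h3 h4 h5 h6 h9 h10
  -- derived integer facts
  obtain ⟨t, htdef⟩ : ∃ t : ℤ, t = k1 - 1 := ⟨_, rfl⟩
  obtain ⟨v, hvdef⟩ : ∃ v : ℤ, v = k2 := ⟨_, rfl⟩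
  obtain ⟨u, hudef⟩ : ∃ u : ℤ, u = -k3 := ⟨_, rfl⟩
  obtain ⟨a, hadef⟩ : ∃ a : ℤ, a = k4 := ⟨_, rfl⟩
  obtain ⟨b, hbdef⟩ : ∃ b : ℤ, b = -k5 := ⟨_, rfl⟩
  obtain ⟨x, hxdef⟩ : ∃ x : ℤ, x = k9 - k6 - k1 + 1 := ⟨_, rfl⟩
  obtain ⟨y, hydef⟩ : ∃ y : ℤ, y = k10 - k5 - k2 := ⟨_, rfl⟩
  have ht : ((t : ℤ) : ℝ) = P 1 0 * P 1 1 := by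
    rw [htdef]; push_cast; linear_combination hdet - h1
  have hv : ((v : ℤ) : ℝ) = P 1 1 * P 1 1 := by rw [hvdef]; linear_combination -h2
  have hu : ((u : ℤ) : ℝ) = P 1 0 * P 1 0 := by rw [hudef]; push_cast; linear_combination h3
  have ha : ((a : ℤ) : ℝ) = 3 * (P 0 0 * P 0 0) := by rw [hadef]; linear_combination -h4
  have hb : ((b : ℤ) : ℝ) = 3 * (P 0 1 * P 0 1) := by
    rw [hbdef]; push_cast; linear_combination h5
  have hx1 : ((x : ℤ) : ℝ) = 3 * (P 0 0 * P 1 1) := by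
    rw [hxdef]; push_cast; linear_combination -h9 + h6 + h1 - hdet
  have hy1 : ((y : ℤ) : ℝ) = 3 * (P 0 1 * P 1 1) := by
    rw [hydef]; push_cast; linear_combination -h10 + h5 + h2
  -- divide the last two by 3
  have hx3 : (3:ℤ) ∣ x := by
    have hsq : (x ^ 2 : ℤ) = 3 * (a * v) := by
      have : ((x ^ 2 : ℤ) : ℝ) = ((3 * (a * v) : ℤ) : ℝ) := by
        push_cast
        rw [hx1, ha, hv]; ring
      exact_mod_cast this
    exact Int.prime_three.dvd_of_dvd_pow (n := 2) ⟨a * v, hsq⟩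
  have hy3 : (3:ℤ) ∣ y := by
    have hsq : (y ^ 2 : ℤ) = 3 * (b * v) := by
      have : ((y ^ 2 : ℤ) : ℝ) = ((3 * (b * v) : ℤ) : ℝ) := by
        push_cast
        rw [hy1, hb, hv]; ring
      exact_mod_cast this
    exact Int.prime_three.dvd_of_dvd_pow (n := 2) ⟨b * v, hsq⟩
  obtain ⟨e, rfl⟩ := hx3
  obtain ⟨g, rfl⟩ := hy3
  have he : ((e : ℤ) : ℝ) = P 0 0 * P 1 1 := by push_cast at hx1; linarith
  have hg : ((g : ℤ) : ℝ) = P 0 1 * P 1 1 := by push_cast at hy1; linarith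
  -- integer hypotheses for keyLemma
  have hD0 : 0 < v := by
    have h0 : (0:ℝ) < (v:ℝ) := by rw [hv]; exact mul_self_pos.mpr hs
    exact_mod_cast h0
  have hdetZ : e * v - g * t = v := by
    have h0 : ((e * v - g * t : ℤ) : ℝ) = ((v : ℤ) : ℝ) := by
      push_cast
      rw [he, hv, hg, ht]
      linear_combination (P 1 1 * P 1 1) * hdet
    exact_mod_cast h0
  have htZ : v ∣ t ^ 2 := by
    refine ⟨u, ?_⟩
    have h0 : ((t ^ 2 : ℤ) : ℝ) = ((v * u : ℤ) : ℝ) := by push_cast; rw [ht, hv, hu]; ring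
    exact_mod_cast h0
  have hvZ : v ∣ v ^ 2 := ⟨v, by ring⟩
  have heZ : v ∣ 3 * e ^ 2 := by
    refine ⟨a, ?_⟩
    have h0 : ((3 * e ^ 2 : ℤ) : ℝ) = ((v * a : ℤ) : ℝ) := by push_cast; rw [he, hv, ha]; ring
    exact_mod_cast h0
  have hgZ : v ∣ 3 * g ^ 2 := by
    refine ⟨b, ?_⟩
    have h0 : ((3 * g ^ 2 : ℤ) : ℝ) = ((v * b : ℤ) : ℝ) := by push_cast; rw [hg, hv, hb]; ring
    exact_mod_cast h0
  obtain ⟨w, hw, hcase⟩ := keyLemma v.natAbs v e g t v rfl hD0 hdetZ htZ hvZ heZ hgZ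
  have hw0 : ((w:ℤ):ℝ) ≠ 0 := Int.cast_ne_zero.mpr hw.ne'
  rcases hcase with ⟨hD, hwe, hwg, hwt, _⟩ | ⟨hD, hwe, hwg, hwt, _⟩
  · -- integral case : P ∈ SL(2,ℤ)
    left
    obtain ⟨E, hE⟩ := hwe
    obtain ⟨G, hG⟩ := hwg
    obtain ⟨T1, hT1⟩ := hwt
    have hEdet : E * w - G * T1 = 1 := by
      have h0 : w ^ 2 * (E * w - G * T1) = w ^ 2 * 1 := by
        rw [hE, hG, hT1, hD] at hdetZ
        linear_combination hdetZ
      exact mul_left_cancel₀ (pow_ne_zero 2 hw.ne') h0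
    have hss : P 1 1 * P 1 1 = ((w:ℤ):ℝ) * ((w:ℤ):ℝ) := by
      rw [← hv, hD]; push_cast; ring
    rw [hE] at he
    rw [hG] at hg
    rw [hT1] at ht
    push_cast at he hg ht
    rw [QuotientGroup.eq, mul_one]
    apply inv_mem
    rcases mul_self_eq_mul_self_iff.mp hss with hsv | hsv
    · rw [hsv] at he hg ht
      have hp00 : P 0 0 = (E:ℝ) := mul_right_cancel₀ hw0 (by linarith)
      have hp01 : P 0 1 = (G:ℝ) := mul_right_cancel₀ hw0 (by linarith)
      have hp10 : P 1 0 = (T1:ℝ) := mul_right_cancel₀ hw0 (by linarith)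
      refine ⟨⟨!![E, G; T1, w], by rw [Matrix.det_fin_two_of]; linear_combination hEdet⟩, ?_⟩
      apply (Matrix.SpecialLinearGroup.ext _ _ ?_).symm
      intro i j
      fin_cases i <;> fin_cases j <;> simp [toSL2R_mk_apply, hp00, hp01, hp10, hsv]
    · rw [hsv] at he hg ht
      have hp00 : P 0 0 = -(E:ℝ) := mul_right_cancel₀ hw0 (by linarith)
      have hp01 : P 0 1 = -(G:ℝ) := mul_right_cancel₀ hw0 (by linarith)
      have hp10 : P 1 0 = -(T1:ℝ) := mul_right_cancel₀ hw0 (by linarith)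
      refine ⟨⟨!![-E, -G; -T1, -w], by rw [Matrix.det_fin_two_of]; linear_combination hEdet⟩, ?_⟩
      apply (Matrix.SpecialLinearGroup.ext _ _ ?_).symm
      intro i j
      fin_cases i <;> fin_cases j <;> simp [toSL2R_mk_apply, hp00, hp01, hp10, hsv]
  · -- the P2 case
    right
    obtain ⟨E, hE⟩ := hwe
    obtain ⟨G, hG⟩ := hwg
    obtain ⟨T1, hT1⟩ := hwt
    have hEdet : E * w - G * T1 = 1 := by
      have h0 : (3 * w ^ 2) * (E * w - G * T1) = (3 * w ^ 2) * 1 := by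
        rw [hE, hG, hT1, hD] at hdetZ
        linear_combination hdetZ
      exact mul_left_cancel₀ (by positivity) h0
    have hss : P 1 1 * P 1 1 = (((w:ℤ):ℝ) * √3) * (((w:ℤ):ℝ) * √3) := by
      rw [← hv, hD]; push_cast
      linear_combination (-((w:ℤ):ℝ) * ((w:ℤ):ℝ)) * sqrt3_sq
    rw [hE] at he
    rw [hG] at hg
    rw [hT1] at ht
    push_cast at he hg ht
    rw [QuotientGroup.eq]
    rcases mul_self_eq_mul_self_iff.mp hss with hsv | hsv
    · rw [hsv] at he hg ht
      have hp00 : P 0 0 = (√3)⁻¹ * (E:ℝ) := by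
        have h'' : (E:ℝ) = P 0 0 * √3 := mul_left_cancel₀ hw0 (by linarith)
        field_simp [sqrt3_ne]
        linarith
      have hp01 : P 0 1 = (√3)⁻¹ * (G:ℝ) := by
        have h'' : (G:ℝ) = P 0 1 * √3 := mul_left_cancel₀ hw0 (by linarith)
        field_simp [sqrt3_ne]
        linarith
      have hp10 : P 1 0 = √3 * (T1:ℝ) := by
        have h'' : (3:ℝ) * (T1:ℝ) = P 1 0 * √3 := mul_left_cancel₀ hw0 (by linarith)
        apply mul_right_cancel₀ sqrt3_ne
        linear_combination -h'' - ((T1:ℤ):ℝ) * sqrt3_sq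
      have hPB : ∃ B : SL(2,ℤ), P = P2 * toSL2R B := by
        refine ⟨⟨!![E, G; T1, w], by rw [Matrix.det_fin_two_of]; linear_combination hEdet⟩, ?_⟩
        apply Matrix.SpecialLinearGroup.ext
        intro i j
        fin_cases i <;> fin_cases j <;>
          simp [Matrix.SpecialLinearGroup.coe_mul, toSL2R_mk_apply, P2_coe, Matrix.mul_apply,
            Fin.sum_univ_two, Matrix.vecMul, dotProduct, Matrix.map_apply,
            hp00, hp01, hp10, hsv] <;> ring
      obtain ⟨B, hPB⟩ := hPB
      exact ⟨B⁻¹, by rw [map_inv, hPB]; group⟩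
    · rw [hsv] at he hg ht
      have hp00 : P 0 0 = (√3)⁻¹ * (-(E:ℝ)) := by
        have h'' : -(E:ℝ) = P 0 0 * √3 := mul_left_cancel₀ hw0 (by linarith)
        field_simp [sqrt3_ne]
        linarith
      have hp01 : P 0 1 = (√3)⁻¹ * (-(G:ℝ)) := by
        have h'' : -(G:ℝ) = P 0 1 * √3 := mul_left_cancel₀ hw0 (by linarith)
        field_simp [sqrt3_ne]
        linarith
      have hp10 : P 1 0 = √3 * (-(T1:ℝ)) := by
        have h'' : (3:ℝ) * (-(T1:ℝ)) = P 1 0 * √3 := mul_left_cancel₀ hw0 (by linarith)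
        apply mul_right_cancel₀ sqrt3_ne
        linear_combination -h'' + ((T1:ℤ):ℝ) * sqrt3_sq
      have hPB : ∃ B : SL(2,ℤ), P = P2 * toSL2R B := by
        refine ⟨⟨!![-E, -G; -T1, -w], by rw [Matrix.det_fin_two_of]; linear_combination hEdet⟩, ?_⟩
        apply Matrix.SpecialLinearGroup.ext
        intro i j
        fin_cases i <;> fin_cases j <;>
          simp [Matrix.SpecialLinearGroup.coe_mul, toSL2R_mk_apply, P2_coe, Matrix.mul_apply,
            Fin.sum_univ_two, Matrix.vecMul, dotProduct, Matrix.map_apply,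
            hp00, hp01, hp10, hsv] <;> ring
      obtain ⟨B, hPB⟩ := hPB
      exact ⟨B⁻¹, by rw [map_inv, hPB]; group⟩

/-- `N(Γ₀(3)) = 2`. -/
theorem stmt_14 : (goodCosets (Gamma0 3)).ncard = 2 := by
  have hne : (QuotientGroup.mk 1 : SL(2,ℝ) ⧸ SL2ZinR) ≠ QuotientGroup.mk P2 := by
    intro h
    rw [QuotientGroup.eq] at h
    obtain ⟨B, hB⟩ := h
    have h11 := congrArg (fun M : SL(2,ℝ) => (M : Matrix (Fin 2) (Fin 2) ℝ) 1 1) hB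
    simp [toSL2R, P2_coe] at h11
    have hirr : Irrational (√3) := by
      have := (Nat.prime_iff.mp (by norm_num : Nat.Prime 3)).1
      have h3 : ((3:ℕ):ℝ) = (3:ℝ) := by norm_num
      simpa [h3] using Nat.Prime.irrational_sqrt (by norm_num : Nat.Prime 3)
    exact hirr ⟨((B 1 1 : ℤ) : ℚ), by push_cast; rw [h11]⟩
  have hset : goodCosets (Gamma0 3) = {QuotientGroup.mk 1, QuotientGroup.mk P2} := by
    ext x
    constructor
    · rintro ⟨P, rfl, hgood⟩
      by_cases hs : (P : Matrix (Fin 2) (Fin 2) ℝ) 1 1 = 0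
      · have hdet : P 0 0 * P 1 1 - P 0 1 * P 1 0 = 1 := by
          have h := P.2
          rw [Matrix.det_fin_two] at h
          exact h
        have hr : (P : Matrix (Fin 2) (Fin 2) ℝ) 1 0 ≠ 0 := by
          intro h0
          rw [hs, h0] at hdet
          simp at hdet
        have hs' : ((P * toSL2R Sm : SL(2,ℝ)) : Matrix (Fin 2) (Fin 2) ℝ) 1 1 ≠ 0 := by
          have hent : ((P * toSL2R Sm : SL(2,ℝ)) : Matrix (Fin 2) (Fin 2) ℝ) 1 1 = -(P 1 0) := by
            simp [Sm, toSL2R_mk_apply, Matrix.SpecialLinearGroup.coe_mul, Matrix.mul_apply,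
              Fin.sum_univ_two, Matrix.vecMul, dotProduct, Matrix.map_apply]
          rw [hent]
          exact neg_ne_zero.mpr hr
        have hgood' : ∀ A ∈ Gamma0 3, IsIntegerMatrix
            (((P * toSL2R Sm)⁻¹ * toSL2R A * (P * toSL2R Sm) : SL(2,ℝ)) :
              Matrix (Fin 2) (Fin 2) ℝ) := by
          intro A hA
          have hrw : (P * toSL2R Sm)⁻¹ * toSL2R A * (P * toSL2R Sm)
              = toSL2R Sm⁻¹ * (P⁻¹ * toSL2R A * P) * toSL2R Sm := by
            rw [map_inv]; group
          rw [hrw]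
          have hco : ((toSL2R Sm⁻¹ * (P⁻¹ * toSL2R A * P) * toSL2R Sm : SL(2,ℝ)) :
              Matrix (Fin 2) (Fin 2) ℝ)
              = ((toSL2R Sm⁻¹ : SL(2,ℝ)) : Matrix (Fin 2) (Fin 2) ℝ) *
                ((P⁻¹ * toSL2R A * P : SL(2,ℝ)) : Matrix (Fin 2) (Fin 2) ℝ) *
                ((toSL2R Sm : SL(2,ℝ)) : Matrix (Fin 2) (Fin 2) ℝ) := by
            simp [Matrix.SpecialLinearGroup.coe_mul]
          rw [hco]
          exact isInt_mul (isInt_mul (isInt_toSL2R _) (hgood A hA)) (isInt_toSL2R _)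
        have hmk : (QuotientGroup.mk P : SL(2,ℝ) ⧸ SL2ZinR) = QuotientGroup.mk (P * toSL2R Sm) := by
          rw [QuotientGroup.eq]
          exact ⟨Sm, by group⟩
        rw [hmk]
        rcases main_aux (P * toSL2R Sm) hs' hgood' with h | h
        · exact Or.inl h
        · exact Or.inr h
      · rcases main_aux P hs hgood with h | h
        · exact Or.inl h
        · exact Or.inr h
    · rintro (rfl | rfl)
      · exact one_mem_good
      · exact P2_mem_good
  rw [hset]
  exact Set.ncard_pair hne
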